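/- Let n ≥ 3, let λ be a nonzero real number, and let B = J_n(λ) be the n×n Jordan block with λ on the diagonal and 1 on the superdiagonal. Let S ⊆ ℝⁿ be a set containing more than one state such that every state in S can be steered to every other state in S in the system x(k+1) = (I + u(k)B)x(k). Then every ξ ∈ S satisfies ξ_j = 0 for all j ≥ 3; that is, only the first two entries of any state in such a controllable region can be nonzero. -/

import Mathlib

open Matrix MeasureTheory Polynomial

/-- The product `(I + u(l-1)B) ⋯ (I + u(1)B)(I + u(0)B)`. -/
noncomputable def prodCtrl {n : ℕ} (B : Matrix (Fin n) (Fin n) ℝ) (l : ℕ) (u : ℕ → ℝ) :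
    Matrix (Fin n) (Fin n) ℝ :=
  ((List.range l).reverse.map fun k => (1 : Matrix (Fin n) (Fin n) ℝ) + u k • B).prod

/-- `ξ` can be steered to `η` in the system `x(k+1) = (I + u(k)B) x(k)`. -/
noncomputable def steers {n : ℕ} (B : Matrix (Fin n) (Fin n) ℝ) (ξ η : Fin n → ℝ) : Prop :=
  ∃ l : ℕ, 1 ≤ l ∧ ∃ u : ℕ → ℝ, (prodCtrl B l u).mulVec ξ = η

/-- Near-controllability: outside two Lebesgue-null sets, any state can be steered to any state. -/
noncomputable def nearlyControllable {n : ℕ} (B : Matrix (Fin n) (Fin n) ℝ) : Prop :=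
  ∃ E F : Set (Fin n → ℝ), volume E = 0 ∧ volume F = 0 ∧
    ∀ ξ ∉ E, ∀ η ∉ F, steers B ξ η

/-- The matrix `[ξ, Bξ, B²ξ, …, B^{n-1}ξ]`. -/
noncomputable def ctrlMat {n : ℕ} (B : Matrix (Fin n) (Fin n) ℝ) (ξ : Fin n → ℝ) :
    Matrix (Fin n) (Fin n) ℝ :=
  Matrix.of fun i j => (B ^ (j : ℕ)).mulVec ξ i

/-- The `N × N` Jordan block with eigenvalue `lam`. -/
def jordanBlock (N : ℕ) (lam : ℝ) : Matrix (Fin N) (Fin N) ℝ :=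
  Matrix.of fun i j => if i = j then lam else if (j : ℕ) = (i : ℕ) + 1 then 1 else 0

/-- Block-diagonal Jordan matrix: `r` two-dimensional Jordan blocks with eigenvalues
`lam 0, …, lam (r-1)` followed by `1 × 1` blocks `lam r, …, lam (m-1)` (so `n = m + r`). -/
def pairJordan (n r : ℕ) (lam : ℕ → ℝ) : Matrix (Fin n) (Fin n) ℝ :=
  Matrix.of fun i j =>
    if (i : ℕ) = (j : ℕ) then
      (if (i : ℕ) < 2 * r then lam ((i : ℕ) / 2) else lam ((i : ℕ) - r))
    else if (j : ℕ) = (i : ℕ) + 1 ∧ (i : ℕ) < 2 * r ∧ (i : ℕ) % 2 = 0 then 1 else 0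

/-! ### Auxiliary scalar machinery:
`q0, q1, q2` are the first three "Taylor coefficients" of the product `∏ (1 + cB)`
viewed as a polynomial in the nilpotent part of the Jordan block. -/

noncomputable def q0 (lam : ℝ) : List ℝ → ℝ
  | [] => 1
  | c :: K => (1 + c * lam) * q0 lam K

noncomputable def q1 (lam : ℝ) : List ℝ → ℝ
  | [] => 0
  | c :: K => (1 + c * lam) * q1 lam K + c * q0 lam K

noncomputable def q2 (lam : ℝ) : List ℝ → ℝ
  | [] => 0
  | c :: K => (1 + c * lam) * q2 lam K + c * q1 lam K

lemma q0_factors_ne (lam : ℝ) : ∀ K : List ℝ, q0 lam K ≠ 0 → ∀ c ∈ K, 1 + c * lam ≠ 0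
  | [], _, c, hc => absurd hc List.not_mem_nil
  | c :: K, h, d, hd => by
    rw [q0] at h
    rcases List.mem_cons.mp hd with rfl | hd
    · exact left_ne_zero_of_mul h
    · exact q0_factors_ne lam K (right_ne_zero_of_mul h) d hd

lemma q1_eq (lam : ℝ) : ∀ K : List ℝ, (∀ c ∈ K, 1 + c * lam ≠ 0) →
    q1 lam K = q0 lam K * (K.map (fun c => c / (1 + c * lam))).sum
  | [], _ => by simp [q0, q1]
  | c :: K, h => by
    have hc : 1 + c * lam ≠ 0 := h c List.mem_cons_self
    have ih := q1_eq lam K (fun d hd => h d (List.mem_cons_of_mem c hd))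
    rw [q1, q0, ih, List.map_cons, List.sum_cons]
    field_simp
    ring

lemma q2_eq (lam : ℝ) : ∀ K : List ℝ, (∀ c ∈ K, 1 + c * lam ≠ 0) →
    2 * q2 lam K = q0 lam K *
      (((K.map (fun c => c / (1 + c * lam))).sum) ^ 2
        - (K.map (fun c => (c / (1 + c * lam)) ^ 2)).sum)
  | [], _ => by simp [q0, q2]
  | c :: K, h => by
    have hc : 1 + c * lam ≠ 0 := h c List.mem_cons_self
    have h' : ∀ d ∈ K, 1 + d * lam ≠ 0 := fun d hd => h d (List.mem_cons_of_mem c hd)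
    have ih := q2_eq lam K h'
    have ih1 := q1_eq lam K h'
    rw [q2, q0, List.map_cons, List.sum_cons, List.map_cons, List.sum_cons, ih1]
    have expand : ((c / (1 + c * lam) + (List.map (fun c => c / (1 + c * lam)) K).sum) ^ 2
        - ((c / (1 + c * lam)) ^ 2 + (List.map (fun c => (c / (1 + c * lam)) ^ 2) K).sum))
        = ((List.map (fun c => c / (1 + c * lam)) K).sum ^ 2
            - (List.map (fun c => (c / (1 + c * lam)) ^ 2) K).sum)
          + 2 * (c / (1 + c * lam)) * (List.map (fun c => c / (1 + c * lam)) K).sum := by ring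
    rw [expand]
    rw [mul_add, mul_comm 2 ((1 + c * lam) * q2 lam K), mul_assoc ((1 + c * lam)) (q2 lam K) 2,
      mul_comm (q2 lam K) 2, ← mul_assoc, mul_assoc (1 + c * lam) 2 (q2 lam K), ih]
    field_simp

/-- Key scalar lemma: if the product of factors `(1 + cλ)` is `1` and the first two
"derivative" coefficients vanish, then all controls vanish. -/
lemma q_key (lam : ℝ) (K : List ℝ) (h0 : q0 lam K = 1) (h1 : q1 lam K = 0)
    (h2 : q2 lam K = 0) : ∀ c ∈ K, c = 0 := by
  have hne : ∀ c ∈ K, 1 + c * lam ≠ 0 := q0_factors_ne lam K (by rw [h0]; norm_num)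
  have e1 := q1_eq lam K hne
  have e2 := q2_eq lam K hne
  rw [h0, h1, one_mul] at e1
  rw [h0, h2, one_mul, mul_zero, ← e1] at e2
  have hQ : (K.map (fun c => (c / (1 + c * lam)) ^ 2)).sum = 0 := by linarith [e2]
  intro c hc
  have hnn : ∀ x ∈ K.map (fun c => (c / (1 + c * lam)) ^ 2), 0 ≤ x := by
    intro y hy
    obtain ⟨d, _, rfl⟩ := List.mem_map.mp hy
    positivity
  have hall : ∀ x ∈ K.map (fun c => (c / (1 + c * lam)) ^ 2), x = 0 := by
    intro x hx
    refine le_antisymm ?_ (hnn x hx)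
    by_contra hlt
    push_neg at hlt
    have : 0 < (K.map (fun c => (c / (1 + c * lam)) ^ 2)).sum := by
      calc 0 < x := hlt
        _ ≤ _ := List.single_le_sum hnn x hx
    linarith [hQ]
  have hsq : (c / (1 + c * lam)) ^ 2 = 0 :=
    hall _ (List.mem_map.mpr ⟨c, hc, rfl⟩)
  have hdz := pow_eq_zero_iff (n := 2) (by norm_num) |>.mp hsq
  rcases div_eq_zero_iff.mp hdz with h | h
  · exact h
  · exact absurd h (hne c hc)

/-! ### Matrix machinery -/

/-- shift operator -/
def shiftT {n : ℕ} (v : Fin n → ℝ) (i : Fin n) : ℝ :=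
  if h : (i : ℕ) + 1 < n then v ⟨(i : ℕ) + 1, h⟩ else 0

lemma jb_mulVec {n : ℕ} (lam : ℝ) (v : Fin n → ℝ) (i : Fin n) :
    (jordanBlock n lam).mulVec v i = lam * v i + shiftT v i := by
  simp only [jordanBlock, Matrix.mulVec, dotProduct, Matrix.of_apply, shiftT]
  by_cases h : (i : ℕ) + 1 < n
  · rw [dif_pos h]
    have key : ∀ j : Fin n, (if i = j then lam else if (j:ℕ) = (i:ℕ)+1 then (1:ℝ) else 0) * v j
        = (if j = i then lam * v j else 0) + (if j = (⟨(i:ℕ)+1, h⟩ : Fin n) then v j else 0) := by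
      intro j
      by_cases h1 : i = j
      · subst h1
        rw [if_pos rfl, if_pos rfl, if_neg (by simp [Fin.ext_iff])]
        ring
      · rw [if_neg h1, if_neg (Ne.symm h1)]
        by_cases h2 : (j : ℕ) = (i : ℕ) + 1
        · rw [if_pos h2, if_pos (by simp [Fin.ext_iff, h2])]; ring
        · rw [if_neg h2, if_neg (by simp [Fin.ext_iff]; omega)]; ring
    rw [Finset.sum_congr rfl (fun j _ => key j), Finset.sum_add_distrib,
      Finset.sum_ite_eq' Finset.univ i (fun j => lam * v j),
      Finset.sum_ite_eq' Finset.univ (⟨(i:ℕ)+1, h⟩ : Fin n) v]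
    simp
  · rw [dif_neg h]
    have key : ∀ j : Fin n, (if i = j then lam else if (j:ℕ) = (i:ℕ)+1 then (1:ℝ) else 0) * v j
        = (if j = i then lam * v j else 0) := by
      intro j
      by_cases h1 : i = j
      · subst h1; rw [if_pos rfl, if_pos rfl]
      · rw [if_neg h1, if_neg (Ne.symm h1), if_neg (by omega : ¬ (j:ℕ) = (i:ℕ)+1)]; ring
    rw [Finset.sum_congr rfl (fun j _ => key j),
      Finset.sum_ite_eq' Finset.univ i (fun j => lam * v j)]
    simp

noncomputable def prodM {n : ℕ} (lam : ℝ) (L : List ℝ) : Matrix (Fin n) (Fin n) ℝ :=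
  (L.map fun c => (1 : Matrix (Fin n) (Fin n) ℝ) + c • jordanBlock n lam).prod

lemma prodM_cons {n : ℕ} (lam : ℝ) (c : ℝ) (L : List ℝ) :
    (prodM lam (c :: L) : Matrix (Fin n) (Fin n) ℝ)
      = ((1 : Matrix (Fin n) (Fin n) ℝ) + c • jordanBlock n lam) * prodM lam L := by
  simp [prodM]

lemma prodM_append {n : ℕ} (lam : ℝ) (L1 L2 : List ℝ) :
    (prodM lam (L1 ++ L2) : Matrix (Fin n) (Fin n) ℝ) = prodM lam L1 * prodM lam L2 := by
  simp [prodM]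

lemma factor_mulVec {n : ℕ} (lam c : ℝ) (w : Fin n → ℝ) (i : Fin n) :
    (((1 : Matrix (Fin n) (Fin n) ℝ) + c • jordanBlock n lam).mulVec w) i
      = (1 + c * lam) * w i + c * shiftT w i := by
  rw [Matrix.add_mulVec, Matrix.one_mulVec, Matrix.smul_mulVec]
  simp only [Pi.add_apply, Pi.smul_apply, smul_eq_mul]
  rw [jb_mulVec]
  ring

lemma main_ind {n : ℕ} (lam : ℝ) (m m1 m2 : Fin n) (hm1 : (m1:ℕ) + 1 = (m:ℕ))
    (hm2 : (m2:ℕ) + 1 = (m1:ℕ)) (v : Fin n → ℝ) (hv : ∀ i : Fin n, (m:ℕ) < (i:ℕ) → v i = 0) :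
    ∀ L : List ℝ,
    (∀ i : Fin n, (m:ℕ) < (i:ℕ) → (prodM lam L).mulVec v i = 0) ∧
    (prodM lam L).mulVec v m = q0 lam L * v m ∧
    (prodM lam L).mulVec v m1 = q0 lam L * v m1 + q1 lam L * v m ∧
    (prodM lam L).mulVec v m2 = q0 lam L * v m2 + q1 lam L * v m1 + q2 lam L * v m := by
  intro L
  induction L with
  | nil =>
    simp only [prodM, List.map_nil, List.prod_nil, Matrix.one_mulVec, q0, q1, q2]
    exact ⟨hv, by ring, by ring, by ring⟩
  | cons c L ih =>
    obtain ⟨ihs, ih0, ih1, ih2⟩ := ih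
    set w := (prodM (n := n) lam L).mulVec v with hw
    have hcomp : ∀ i : Fin n, (prodM (n := n) lam (c :: L)).mulVec v i
        = (1 + c * lam) * w i + c * shiftT w i := by
      intro i
      rw [prodM_cons, ← Matrix.mulVec_mulVec, factor_mulVec]
    have hTm : shiftT w m = 0 := by
      unfold shiftT
      split
      · refine ihs _ ?_; simp only [Fin.val_mk]; omega
      · rfl
    have hTm1 : shiftT w m1 = w m := by
      unfold shiftT
      rw [dif_pos (by omega : (m1:ℕ) + 1 < n)]
      congr 1
      exact Fin.ext (by simp only [Fin.val_mk]; omega)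
    have hTm2 : shiftT w m2 = w m1 := by
      unfold shiftT
      rw [dif_pos (by omega : (m2:ℕ) + 1 < n)]
      congr 1
      exact Fin.ext (by simp only [Fin.val_mk]; omega)
    refine ⟨?_, ?_, ?_, ?_⟩
    · intro i hi
      rw [hcomp]
      have hTi : shiftT w i = 0 := by
        unfold shiftT
        split
        · refine ihs _ ?_; simp only [Fin.val_mk]; omega
        · rfl
      rw [ihs i hi, hTi]; ring
    · rw [hcomp, hTm, ih0, q0]; ring
    · rw [hcomp, hTm1, ih1, ih0, q0, q1]; ring
    · rw [hcomp, hTm2, ih2, ih1, q0, q1, q2]; ring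

lemma prodM_all_zero {n : ℕ} (lam : ℝ) : ∀ L : List ℝ, (∀ c ∈ L, c = 0) →
    (prodM lam L : Matrix (Fin n) (Fin n) ℝ) = 1
  | [], _ => by simp [prodM]
  | c :: L, h => by
    have hc : c = 0 := h c List.mem_cons_self
    rw [prodM_cons, prodM_all_zero lam L (fun d hd => h d (List.mem_cons_of_mem c hd)), hc]
    simp

lemma prodCtrl_eq_prodM {n : ℕ} (lam : ℝ) (l : ℕ) (u : ℕ → ℝ) :
    prodCtrl (jordanBlock n lam) l u = prodM lam ((List.range l).reverse.map u) := by
  rw [prodCtrl, prodM, List.map_map]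
  rfl

/-- for the Jordan block `B = J_n(λ)` with `n ≥ 3` and `λ ≠ 0`, any
controllable region containing more than one state consists of states whose entries
beyond the second all vanish (0-based: `ξ j = 0` for `j ≥ 2`). -/
theorem stmt9 {n : ℕ} (hn : 3 ≤ n) (lam : ℝ) (hlam : lam ≠ 0)
    (S : Set (Fin n → ℝ)) (hS : S.Nontrivial)
    (hctrl : ∀ ξ ∈ S, ∀ η ∈ S, steers (jordanBlock n lam) ξ η) :
    ∀ ξ ∈ S, ∀ j : Fin n, 2 ≤ (j : ℕ) → ξ j = 0 := by
  intro ξ hξ j hj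
  by_contra hne0
  classical
  set F : Finset (Fin n) := Finset.univ.filter (fun i => ξ i ≠ 0) with hF
  have hjF : j ∈ F := by simp [hF, hne0]
  have hFne : F.Nonempty := ⟨j, hjF⟩
  set m : Fin n := F.max' hFne with hm
  have hξm : ξ m ≠ 0 := by
    exact (Finset.mem_filter.mp (F.max'_mem hFne)).2
  have hjm : (j : ℕ) ≤ (m : ℕ) := F.le_max' j hjF
  have hm2 : 2 ≤ (m : ℕ) := le_trans hj hjm
  have hmn : (m : ℕ) < n := m.isLt
  have hsupp : ∀ i : Fin n, (m:ℕ) < (i:ℕ) → ξ i = 0 := by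
    intro i hi
    by_contra hzi
    have hiF : i ∈ F := by simp [hF, hzi]
    have h4 : (i:ℕ) ≤ (m:ℕ) := Fin.le_def.mp (F.le_max' i hiF)
    omega
  set m1 : Fin n := ⟨(m:ℕ) - 1, by omega⟩ with hm1def
  set m2 : Fin n := ⟨(m:ℕ) - 2, by omega⟩ with hm2def
  have hm1 : (m1:ℕ) + 1 = (m:ℕ) := by simp [hm1def]; omega
  have hm2' : (m2:ℕ) + 1 = (m1:ℕ) := by simp [hm1def, hm2def]; omega
  -- every state of S equals ξ
  have key : ∀ η ∈ S, η = ξ := by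
    intro η hη
    obtain ⟨l, _, u, hu⟩ := hctrl ξ hξ η hη
    obtain ⟨l', _, u', hu'⟩ := hctrl η hη ξ hξ
    set L : List ℝ := (List.range l).reverse.map u with hLdef
    set L' : List ℝ := (List.range l').reverse.map u' with hL'def
    rw [prodCtrl_eq_prodM, ← hLdef] at hu
    rw [prodCtrl_eq_prodM, ← hL'def] at hu'
    have hfix : (prodM lam (L' ++ L)).mulVec ξ = ξ := by
      rw [prodM_append, ← Matrix.mulVec_mulVec, hu, hu']
    obtain ⟨_, e0, e1, e2⟩ := main_ind lam m m1 m2 hm1 hm2' ξ hsupp (L' ++ L)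
    rw [hfix] at e0 e1 e2
    have h0 : q0 lam (L' ++ L) = 1 := by
      have hz : (q0 lam (L' ++ L) - 1) * ξ m = 0 := by linear_combination -e0
      rcases mul_eq_zero.mp hz with h | h
      · linarith
      · exact absurd h hξm
    rw [h0, one_mul] at e1 e2
    have h1 : q1 lam (L' ++ L) = 0 := by
      have hz : q1 lam (L' ++ L) * ξ m = 0 := by linear_combination -e1
      rcases mul_eq_zero.mp hz with h | h
      · exact h
      · exact absurd h hξm
    rw [h1, zero_mul, add_zero] at e2
    have h2 : q2 lam (L' ++ L) = 0 := by
      have hz : q2 lam (L' ++ L) * ξ m = 0 := by linear_combination -e2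
      rcases mul_eq_zero.mp hz with h | h
      · exact h
      · exact absurd h hξm
    have hzero := q_key lam (L' ++ L) h0 h1 h2
    have hLzero : ∀ c ∈ L, c = 0 := fun c hc => hzero c (List.mem_append_right _ hc)
    have hid : (prodM lam L : Matrix (Fin n) (Fin n) ℝ) = 1 := prodM_all_zero lam L hLzero
    rw [← hu, hid, Matrix.one_mulVec]
  obtain ⟨a, ha, b, hb, hab⟩ := hS
  exact hab ((key a ha).trans (key b hb).symm)
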